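/- Fix α ∈ (0,1), an integer n ≥ 1, positive reals s, λ, and reals 0 < w_l ≤ 1 for l = 1,…,n. Then the iterated integral ∫₀^{w₁} ⋯ ∫₀^{w_n} λ^{nα} e^{-λ s/(∏_{l=1}^n r_l)} ∏_{l=1}^n (w_l - r_l)^{α-1} r_l^{-(n-l+1)α-1} dr_n ⋯ dr₁ equals Γ(α)^n s^{-nα} e^{-λ s/(∏_{l=1}^n w_l)} ∏_{l=1}^n w_l^{lα-1}. -/

import Mathlib

open MeasureTheory Set Real
open scoped ENNReal

section OneD

-- setup for the substitution r = (u + w⁻¹)⁻¹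
lemma sub_deriv (w : ℝ) (hw : 0 < w) : ∀ u ∈ Ioi (0:ℝ),
    HasDerivWithinAt (fun u : ℝ => (u + w⁻¹)⁻¹) (-((u + w⁻¹)^2)⁻¹) (Ioi 0) u := by
  intro u hu
  have hu := mem_Ioi.mp hu
  have hA : u + w⁻¹ ≠ 0 := by positivity
  have := ((hasDerivAt_id u).add_const w⁻¹).inv hA
  have h2 : HasDerivWithinAt (fun u : ℝ => (u + w⁻¹)⁻¹) (-1 / (id u + w⁻¹) ^ 2) (Ioi 0) u := this.hasDerivWithinAt
  convert h2 using 1; simp [neg_div]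

lemma sub_inj (w : ℝ) (hw : 0 < w) : InjOn (fun u : ℝ => (u + w⁻¹)⁻¹) (Ioi 0) := by
  intro u hu v hv h
  have hu' : (0:ℝ) < u + w⁻¹ := by have := mem_Ioi.mp hu; positivity
  have hv' : (0:ℝ) < v + w⁻¹ := by have := mem_Ioi.mp hv; positivity
  have : u + w⁻¹ = v + w⁻¹ := inv_injective h
  linarith

lemma sub_image (w : ℝ) (hw : 0 < w) : (fun u : ℝ => (u + w⁻¹)⁻¹) '' (Ioi 0) = Ioo 0 w := by
  ext r
  constructor
  · rintro ⟨u, hu, rfl⟩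
    have hu := mem_Ioi.mp hu
    have hA : (0:ℝ) < u + w⁻¹ := by positivity
    refine ⟨by positivity, ?_⟩
    have : w⁻¹ < u + w⁻¹ := by linarith
    calc (u + w⁻¹)⁻¹ < (w⁻¹)⁻¹ := by exact inv_strictAnti₀ (by positivity) this
    _ = w := inv_inv w
  · rintro ⟨hr0, hrw⟩
    refine ⟨r⁻¹ - w⁻¹, ?_, ?_⟩
    · have : w⁻¹ < r⁻¹ := inv_strictAnti₀ hr0 hrw
      simpa [mem_Ioi] using sub_pos.mpr this
    · simp [sub_add_cancel, inv_inv]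

lemma pointwise (α c w u : ℝ) (hw : 0 < w) (hu : 0 < u) :
    ((u + w⁻¹)^2)⁻¹ * (Real.exp (-c / (u + w⁻¹)⁻¹) * (w - (u + w⁻¹)⁻¹) ^ (α-1) * ((u + w⁻¹)⁻¹) ^ (-α-1))
    = Real.exp (-c/w) * w^(α-1) * (u ^ (α-1) * Real.exp (-(c*u))) := by
  set A := u + w⁻¹ with hAdef
  have hA : 0 < A := by positivity
  have h1 : -c / A⁻¹ = -(c*u) + (-c/w) := by
    rw [hAdef]; field_simp; ring
  have h2 : w - A⁻¹ = (w*u)/A := by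
    rw [eq_div_iff hA.ne', hAdef]; field_simp; ring
  have h3 : (w - A⁻¹)^(α-1) = w^(α-1) * u^(α-1) * (A^(α-1))⁻¹ := by
    rw [h2, Real.div_rpow (by positivity) hA.le, Real.mul_rpow hw.le hu.le, div_eq_mul_inv]
  have h4 : ((A:ℝ)⁻¹) ^ (-α-1) = A ^ (α+1) := by
    rw [Real.inv_rpow hA.le, ← Real.rpow_neg hA.le]; ring_nf
  have h6 : ((A^2)⁻¹ * (A^(α-1))⁻¹) * A^(α+1) = 1 := by
    rw [← Real.rpow_natCast A 2, ← Real.rpow_neg hA.le, ← Real.rpow_neg hA.le,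
      ← Real.rpow_add hA, ← Real.rpow_add hA,
      show (-(2:ℕ):ℝ) + -(α-1) + (α+1) = 0 by push_cast; ring, Real.rpow_zero]
  rw [h1, Real.exp_add, h3, h4]
  linear_combination (Real.exp (-(c*u)) * Real.exp (-c/w) * (w^(α-1)*u^(α-1))) * h6

lemma oneD_base (α c : ℝ) (hα : 0 < α) (hc : 0 < c) :
    IntegrableOn (fun u : ℝ => u ^ (α-1) * Real.exp (-(c*u))) (Ioi 0) := by
  have hg := Real.GammaIntegral_convergent hα
  have h2 : IntegrableOn (fun x : ℝ => Real.exp (-(c*x)) * (c*x)^(α-1)) (Ioi 0) := by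
    have := (integrableOn_Ioi_comp_mul_left_iff (fun x : ℝ => Real.exp (-x) * x^(α-1)) 0 hc).mpr
      (by simpa using hg)
    simpa using this
  have h3 : IntegrableOn (fun x : ℝ => c^((1:ℝ)-α) * (Real.exp (-(c*x)) * (c*x)^(α-1))) (Ioi 0) :=
    h2.const_mul (c^((1:ℝ)-α))
  apply MeasureTheory.IntegrableOn.congr_fun h3 _ measurableSet_Ioi
  intro x hx
  have hx := mem_Ioi.mp hx
  dsimp only
  rw [Real.mul_rpow hc.le hx.le]
  rw [show c^((1:ℝ)-α) * (Real.exp (-(c*x)) * (c^(α-1) * x^(α-1)))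
      = (c^((1:ℝ)-α) * c^(α-1)) * (Real.exp (-(c*x)) * x^(α-1)) by ring,
    ← Real.rpow_add hc]
  norm_num; ring

lemma oneD_integral (α c w : ℝ) (hα : 0 < α) (hc : 0 < c) (hw : 0 < w) :
    ∫ r in Ioo 0 w, Real.exp (-c / r) * (w - r) ^ (α-1) * r ^ (-α-1)
      = Real.Gamma α * c ^ (-α) * Real.exp (-c / w) * w ^ (α-1) := by
  rw [← sub_image w hw, integral_image_eq_integral_abs_deriv_smul measurableSet_Ioi
    (sub_deriv w hw) (sub_inj w hw)]
  rw [setIntegral_congr_fun measurableSet_Ioi (g := fun u : ℝ =>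
      Real.exp (-c/w) * w^(α-1) * (u ^ (α-1) * Real.exp (-(c*u)))) (fun u hu => by
    have hu' := mem_Ioi.mp hu
    have hA : (0:ℝ) < u + w⁻¹ := by positivity
    show |(-((u + w⁻¹)^2)⁻¹)| • _ = _
    rw [abs_neg, abs_of_nonneg (by positivity), smul_eq_mul]
    exact pointwise α c w u hw hu')]
  rw [MeasureTheory.integral_const_mul, integral_rpow_mul_exp_neg_mul_Ioi hα hc,
    one_div, Real.inv_rpow hc.le, ← Real.rpow_neg hc.le]
  ring

lemma oneD_integrable (α c w : ℝ) (hα : 0 < α) (hc : 0 < c) (hw : 0 < w) :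
    IntegrableOn (fun r : ℝ => Real.exp (-c / r) * (w - r) ^ (α-1) * r ^ (-α-1)) (Ioo 0 w) := by
  rw [← sub_image w hw, integrableOn_image_iff_integrableOn_abs_deriv_smul measurableSet_Ioi
    (sub_deriv w hw) (sub_inj w hw)]
  have h : IntegrableOn (fun x : ℝ => Real.exp (-c/w) * w^(α-1) * (x ^ (α-1) * Real.exp (-(c*x)))) (Ioi 0) :=
    (oneD_base α c hα hc).const_mul _
  apply MeasureTheory.IntegrableOn.congr_fun h _ measurableSet_Ioi
  intro u hu
  have hu' := mem_Ioi.mp hu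
  have hA : (0:ℝ) < u + w⁻¹ := by positivity
  show _ = |(-((u + w⁻¹)^2)⁻¹)| • _
  rw [abs_neg, abs_of_nonneg (by positivity), smul_eq_mul]
  exact (pointwise α c w u hw hu').symm


lemma oneD_lintegral (α c w : ℝ) (hα : 0 < α) (hc : 0 < c) (hw : 0 < w) :
    ∫⁻ r in Ioo (0:ℝ) w, ENNReal.ofReal (Real.exp (-c / r) * (w - r) ^ (α-1) * r ^ (-α-1))
      = ENNReal.ofReal (Real.Gamma α * c ^ (-α) * Real.exp (-c / w) * w ^ (α-1)) := by
  rw [← MeasureTheory.ofReal_integral_eq_lintegral_ofReal (oneD_integrable α c w hα hc hw) ?_,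
    oneD_integral α c w hα hc hw]
  filter_upwards [ae_restrict_mem measurableSet_Ioo] with r hr
  have h1 : (0:ℝ) ≤ w - r := by linarith [hr.2]
  exact mul_nonneg (mul_nonneg (Real.exp_pos _).le (Real.rpow_nonneg h1 _))
    (Real.rpow_nonneg hr.1.le _)

end OneD

lemma snoc_mem_pi {n : ℕ} (w : Fin (n+1) → ℝ) (y : Fin n → ℝ) (x : ℝ) :
    Fin.snoc y x ∈ Set.univ.pi (fun l : Fin (n+1) => Ioo (0:ℝ) (w l)) ↔
      x ∈ Ioo (0:ℝ) (w (Fin.last n)) ∧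
        y ∈ Set.univ.pi (fun l : Fin n => Ioo (0:ℝ) (w l.castSucc)) := by
  simp only [Set.mem_univ_pi]
  constructor
  · intro h
    exact ⟨by simpa using h (Fin.last n), fun l => by simpa using h l.castSucc⟩
  · rintro ⟨hx, hy⟩ l
    refine Fin.lastCases ?_ ?_ l
    · simpa using hx
    · intro i; simpa using hy i

lemma integrand_measurable {n : ℕ} (α lam s C : ℝ) (w : Fin n → ℝ) (e : Fin n → ℝ) :
    Measurable (fun r : Fin n → ℝ => lam ^ C * Real.exp (-(lam * s) / ∏ l, r l) *
      ∏ l, ((w l - r l) ^ (α - 1) * r l ^ (e l))) := by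
  refine Measurable.mul (Measurable.mul measurable_const ?_) ?_
  · exact (measurable_const.div (Finset.measurable_prod _ fun l _ => measurable_pi_apply l)).exp
  · exact Finset.measurable_prod _ fun l _ =>
      ((measurable_const.sub (measurable_pi_apply l)).pow measurable_const).mul
        ((measurable_pi_apply l).pow measurable_const)

lemma mainL (α : ℝ) (hα : 0 < α) : ∀ n : ℕ, ∀ s lam : ℝ, 0 < s → 0 < lam →
    ∀ w : Fin n → ℝ, (∀ l, 0 < w l) →
    ∫⁻ r in Set.univ.pi (fun l : Fin n => Set.Ioo (0 : ℝ) (w l)),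
        ENNReal.ofReal (lam ^ ((n : ℝ) * α) * Real.exp (-(lam * s) / ∏ l, r l) *
          ∏ l, ((w l - r l) ^ (α - 1) * r l ^ (-(((n : ℝ) - ((l : ℕ) : ℝ)) * α) - 1)))
      = ENNReal.ofReal (Real.Gamma α ^ n * s ^ (-(n : ℝ) * α) *
          Real.exp (-(lam * s) / ∏ l, w l) *
          ∏ l, w l ^ ((((l : ℕ) : ℝ) + 1) * α - 1)) := by
  intro n
  induction n with
  | zero =>
    intro s lam hs hlam w hw
    have hset : (Set.univ.pi fun l : Fin 0 => Ioo (0:ℝ) (w l)) = Set.univ := by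
      ext r; simp
    have h1 : (volume : Measure (Fin 0 → ℝ)) Set.univ = 1 := by
      rw [MeasureTheory.volume_pi, Measure.pi_univ]; simp
    rw [hset, Measure.restrict_univ]
    simp only [Fin.prod_univ_zero, Nat.cast_zero, zero_mul, neg_zero, Real.rpow_zero,
      pow_zero, one_mul, mul_one]
    rw [lintegral_const, h1, mul_one]
  | succ n IH =>
    intro s lam hs hlam w hw
    have hwl : 0 < w (Fin.last n) := hw _
    have hs' : 0 < s / w (Fin.last n) := div_pos hs hwl
    set S : Set (Fin (n+1) → ℝ) := Set.univ.pi (fun l : Fin (n+1) => Ioo (0:ℝ) (w l)) with hSdef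
    have hS : MeasurableSet S := MeasurableSet.univ_pi fun l => measurableSet_Ioo
    set S' : Set (Fin n → ℝ) := Set.univ.pi (fun l : Fin n => Ioo (0:ℝ) (w l.castSucc)) with hS'def
    have hS' : MeasurableSet S' := MeasurableSet.univ_pi fun l => measurableSet_Ioo
    set F : (Fin (n+1) → ℝ) → ℝ := fun r =>
      lam ^ (((n+1 : ℕ) : ℝ) * α) * Real.exp (-(lam * s) / ∏ l, r l) *
        ∏ l, ((w l - r l) ^ (α - 1) * r l ^ (-((((n+1 : ℕ) : ℝ) - ((l : ℕ) : ℝ)) * α) - 1))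
      with hFdef
    have hFm : Measurable F := integrand_measurable α lam s _ w _
    set G : (Fin (n+1) → ℝ) → ℝ≥0∞ := S.indicator fun r => ENNReal.ofReal (F r) with hGdef
    have hGm : Measurable G := (ENNReal.measurable_ofReal.comp hFm).indicator hS
    set e : (Fin (n+1) → ℝ) ≃ᵐ ℝ × (Fin n → ℝ) :=
      MeasurableEquiv.piFinSuccAbove (fun _ : Fin (n+1) => ℝ) (Fin.last n) with hedef
    have hmp := MeasureTheory.volume_preserving_piFinSuccAbove
      (fun _ : Fin (n+1) => ℝ) (Fin.last n)
    have hsymm : ∀ (x : ℝ) (y : Fin n → ℝ), e.symm (x, y) = Fin.snoc y x := by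
      intro x y
      simp [hedef, MeasurableEquiv.piFinSuccAbove, Fin.snocEquiv]
    -- inner integrand data
    have key1 : ∀ y : Fin n → ℝ,
        (∫⁻ x, G (Fin.snoc y x))
          = S'.indicator (fun y => ∫⁻ x in Ioo (0:ℝ) (w (Fin.last n)),
              ENNReal.ofReal (F (Fin.snoc y x))) y := by
      intro y
      by_cases hy : y ∈ S'
      · rw [Set.indicator_of_mem hy, ← lintegral_indicator measurableSet_Ioo]
        congr 1; ext x
        by_cases hx : x ∈ Ioo (0:ℝ) (w (Fin.last n))
        · rw [hGdef, Set.indicator_of_mem hx,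
            Set.indicator_of_mem ((snoc_mem_pi w y x).mpr ⟨hx, hy⟩)]
        · rw [hGdef, Set.indicator_of_notMem hx,
            Set.indicator_of_notMem (fun hmem => hx ((snoc_mem_pi w y x).mp hmem).1)]
      · rw [Set.indicator_of_notMem hy]
        have hz : ∀ x : ℝ, G (Fin.snoc y x) = 0 := fun x =>
          Set.indicator_of_notMem (fun hmem => hy ((snoc_mem_pi w y x).mp hmem).2) _
        simp [hz]
    have key2 : ∀ y ∈ S',
        (∫⁻ x in Ioo (0:ℝ) (w (Fin.last n)), ENNReal.ofReal (F (Fin.snoc y x)))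
          = ENNReal.ofReal ((Real.Gamma α * s ^ (-α) * (w (Fin.last n)) ^ (α-1)) *
              (lam ^ ((n : ℝ) * α) *
                Real.exp (-(lam * (s / w (Fin.last n))) / ∏ l, y l) *
                ∏ l : Fin n, ((w l.castSucc - y l) ^ (α - 1) *
                  y l ^ (-(((n : ℝ) - ((l : ℕ) : ℝ)) * α) - 1)))) := by
      intro y hy
      have hy0 : ∀ l, 0 < y l := fun l => (hy l (Set.mem_univ l)).1
      have hy1 : ∀ l, y l < w l.castSucc := fun l => (hy l (Set.mem_univ l)).2
      have hP : 0 < ∏ l, y l := Finset.prod_pos fun l _ => hy0 l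
      set c : ℝ := lam * s / ∏ l, y l with hcdef
      have hc : 0 < c := div_pos (mul_pos hlam hs) hP
      set K : ℝ := lam ^ (((n+1 : ℕ) : ℝ) * α) *
        ∏ l : Fin n, ((w l.castSucc - y l) ^ (α - 1) *
          y l ^ (-((((n+1 : ℕ) : ℝ) - ((l : ℕ) : ℝ)) * α) - 1)) with hKdef
      have hK : 0 ≤ K := by
        apply mul_nonneg (Real.rpow_nonneg hlam.le _)
        exact Finset.prod_nonneg fun l _ => mul_nonneg
          (Real.rpow_nonneg (sub_nonneg.mpr (hy1 l).le) _) (Real.rpow_nonneg (hy0 l).le _)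
      have hFx : ∀ x : ℝ, F (Fin.snoc y x)
          = K * (Real.exp (-c / x) * (w (Fin.last n) - x) ^ (α-1) * x ^ (-α-1)) := by
        intro x
        rw [hFdef, hKdef]
        simp only [Fin.prod_snoc, Fin.prod_univ_castSucc, Fin.snoc_castSucc, Fin.snoc_last,
          Fin.val_last, Fin.coe_castSucc]
        rw [show -((((n+1 : ℕ) : ℝ) - ((n : ℕ) : ℝ)) * α) - 1 = -α - 1 by push_cast; ring]
        rw [show -(lam * s) / ((∏ l, y l) * x) = -(lam * s / ∏ l, y l) / x by
          rw [neg_div, neg_div, div_div]]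
        rw [hcdef]
        ring
      simp only [hFx]
      simp_rw [ENNReal.ofReal_mul hK]
      rw [lintegral_const_mul' _ _ ENNReal.ofReal_ne_top,
        oneD_lintegral α c (w (Fin.last n)) hα hc hwl, ← ENNReal.ofReal_mul hK]
      congr 1
      -- real identity B
      have hc_rpow : c ^ (-α) = lam ^ (-α) * s ^ (-α) * (∏ l, y l) ^ α := by
        rw [hcdef, div_eq_mul_inv, Real.mul_rpow (by positivity) (by positivity),
          Real.mul_rpow hlam.le hs.le, Real.inv_rpow hP.le, ← Real.rpow_neg hP.le, neg_neg]
      have hprod_split : (∏ l, y l) ^ α = ∏ l, (y l) ^ α :=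
        (Real.finset_prod_rpow _ _ (fun l _ => (hy0 l).le) α).symm
      have hexp : -c / w (Fin.last n) = -(lam * (s / w (Fin.last n))) / ∏ l, y l := by
        rw [hcdef, neg_div, neg_div, neg_inj]
        field_simp
      have hPM : (∏ l : Fin n, ((w l.castSucc - y l) ^ (α - 1) *
            y l ^ (-((((n+1 : ℕ) : ℝ) - ((l : ℕ) : ℝ)) * α) - 1))) * (∏ l, (y l) ^ α)
          = ∏ l : Fin n, ((w l.castSucc - y l) ^ (α - 1) *
            y l ^ (-(((n : ℝ) - ((l : ℕ) : ℝ)) * α) - 1)) := by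
        rw [← Finset.prod_mul_distrib]
        refine Finset.prod_congr rfl fun l _ => ?_
        rw [mul_assoc, ← Real.rpow_add (hy0 l)]
        congr 2
        push_cast; ring
      have hlam_merge : lam ^ (((n+1 : ℕ) : ℝ) * α) * lam ^ (-α) = lam ^ ((n : ℝ) * α) := by
        rw [← Real.rpow_add hlam]
        congr 1
        push_cast
        ring
      rw [hKdef, hc_rpow, hprod_split, hexp]
      linear_combination (Real.Gamma α * s ^ (-α) * (w (Fin.last n)) ^ (α-1) *
          Real.exp (-(lam * (s / w (Fin.last n))) / ∏ l, y l) *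
          lam ^ (((n+1 : ℕ) : ℝ) * α) * lam ^ (-α)) * hPM +
        (Real.Gamma α * s ^ (-α) * (w (Fin.last n)) ^ (α-1) *
          Real.exp (-(lam * (s / w (Fin.last n))) / ∏ l, y l) *
          (∏ l : Fin n, ((w l.castSucc - y l) ^ (α - 1) *
            y l ^ (-(((n : ℝ) - ((l : ℕ) : ℝ)) * α) - 1)))) * hlam_merge
    -- now assemble
    calc ∫⁻ r in S, ENNReal.ofReal (F r)
        = ∫⁻ r, G r := (lintegral_indicator hS _).symm
      _ = ∫⁻ p : ℝ × (Fin n → ℝ), G (e.symm p) := ((hmp.symm e).lintegral_comp hGm).symm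
      _ = ∫⁻ y, ∫⁻ x, G (e.symm (x, y)) := by
          rw [MeasureTheory.Measure.volume_eq_prod]
          exact lintegral_prod_symm' _ (hGm.comp e.symm.measurable)
      _ = ∫⁻ y, S'.indicator (fun y => ∫⁻ x in Ioo (0:ℝ) (w (Fin.last n)),
            ENNReal.ofReal (F (Fin.snoc y x))) y := by
          refine lintegral_congr fun y => ?_
          simp_rw [hsymm]
          exact key1 y
      _ = ∫⁻ y in S', ∫⁻ x in Ioo (0:ℝ) (w (Fin.last n)),
            ENNReal.ofReal (F (Fin.snoc y x)) := lintegral_indicator hS' _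
      _ = ∫⁻ y in S', ENNReal.ofReal ((Real.Gamma α * s ^ (-α) * (w (Fin.last n)) ^ (α-1)) *
            (lam ^ ((n : ℝ) * α) *
              Real.exp (-(lam * (s / w (Fin.last n))) / ∏ l, y l) *
              ∏ l : Fin n, ((w l.castSucc - y l) ^ (α - 1) *
                y l ^ (-(((n : ℝ) - ((l : ℕ) : ℝ)) * α) - 1)))) := by
          refine setLIntegral_congr_fun hS' (fun y hy => key2 y hy)
      _ = ENNReal.ofReal (Real.Gamma α * s ^ (-α) * (w (Fin.last n)) ^ (α-1)) *
            ∫⁻ y in S', ENNReal.ofReal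
              (lam ^ ((n : ℝ) * α) *
                Real.exp (-(lam * (s / w (Fin.last n))) / ∏ l, y l) *
                ∏ l : Fin n, ((w l.castSucc - y l) ^ (α - 1) *
                  y l ^ (-(((n : ℝ) - ((l : ℕ) : ℝ)) * α) - 1))) := by
          simp_rw [ENNReal.ofReal_mul (by positivity : (0:ℝ) ≤
            Real.Gamma α * s ^ (-α) * (w (Fin.last n)) ^ (α-1))]
          rw [lintegral_const_mul' _ _ ENNReal.ofReal_ne_top]
      _ = ENNReal.ofReal (Real.Gamma α * s ^ (-α) * (w (Fin.last n)) ^ (α-1)) *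
            ENNReal.ofReal (Real.Gamma α ^ n * (s / w (Fin.last n)) ^ (-(n : ℝ) * α) *
              Real.exp (-(lam * (s / w (Fin.last n))) / ∏ l : Fin n, w l.castSucc) *
              ∏ l : Fin n, (w l.castSucc) ^ ((((l : ℕ) : ℝ) + 1) * α - 1)) := by
          rw [IH (s / w (Fin.last n)) lam hs' hlam (fun l => w l.castSucc) (fun l => hw _)]
      _ = ENNReal.ofReal (Real.Gamma α ^ (n+1) * s ^ (-((n+1 : ℕ) : ℝ) * α) *
            Real.exp (-(lam * s) / ∏ l, w l) *
            ∏ l : Fin (n+1), w l ^ ((((l : ℕ) : ℝ) + 1) * α - 1)) := by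
          rw [← ENNReal.ofReal_mul (by positivity)]
          congr 1
          -- real identity C
          have hPw : 0 < ∏ l : Fin n, w l.castSucc :=
            Finset.prod_pos fun l _ => hw _
          have h1 : (s / w (Fin.last n)) ^ (-(n : ℝ) * α)
              = s ^ (-(n : ℝ) * α) * (w (Fin.last n)) ^ ((n : ℝ) * α) := by
            rw [div_eq_mul_inv, Real.mul_rpow hs.le (by positivity),
              Real.inv_rpow hwl.le, ← Real.rpow_neg hwl.le,
              show -(-(n:ℝ) * α) = (n:ℝ) * α by ring]
          have h2 : -(lam * (s / w (Fin.last n))) / ∏ l : Fin n, w l.castSucc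
              = -(lam * s) / ((∏ l : Fin n, w l.castSucc) * w (Fin.last n)) := by
            rw [neg_div, neg_div, neg_inj]
            field_simp
          have h3 : s ^ (-α) * s ^ (-(n : ℝ) * α) = s ^ (-((n+1 : ℕ) : ℝ) * α) := by
            rw [← Real.rpow_add hs]
            congr 1; push_cast; ring
          have h4 : (w (Fin.last n)) ^ (α - 1) * (w (Fin.last n)) ^ ((n : ℝ) * α)
              = (w (Fin.last n)) ^ ((((n : ℕ) : ℝ) + 1) * α - 1) := by
            rw [← Real.rpow_add hwl]
            congr 1; push_cast; ring
          rw [Fin.prod_univ_castSucc (f := fun l : Fin (n+1) => w l ^ ((((l : ℕ) : ℝ) + 1) * α - 1)),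
            Fin.prod_univ_castSucc (f := w)]
          simp only [Fin.val_last, Fin.coe_castSucc]
          rw [h1, h2]
          linear_combination (Real.Gamma α ^ n * Real.Gamma α *
              Real.exp (-(lam * s) / ((∏ l : Fin n, w l.castSucc) * w (Fin.last n))) *
              (∏ l : Fin n, (w l.castSucc) ^ ((((l : ℕ) : ℝ) + 1) * α - 1)) *
              (w (Fin.last n)) ^ (α - 1) * (w (Fin.last n)) ^ ((n : ℝ) * α)) * h3 +
            (Real.Gamma α ^ n * Real.Gamma α *
              Real.exp (-(lam * s) / ((∏ l : Fin n, w l.castSucc) * w (Fin.last n))) *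
              (∏ l : Fin n, (w l.castSucc) ^ ((((l : ℕ) : ℝ) + 1) * α - 1)) *
              s ^ (-((n+1 : ℕ) : ℝ) * α)) * h4


/-- **Proposition 2 (the n-fold integral identity).** For `α ∈ (0,1)`, `n ≥ 1`,
positive `s, λ` and `0 < w_l ≤ 1`, the `n`-fold integral over `∏_l (0, w_l)` of
`λ^{nα} e^{-λ s/∏ r_l} ∏_l (w_l - r_l)^{α-1} r_l^{-(n-l+1)α-1}` equals
`Γ(α)^n s^{-nα} e^{-λ s/∏ w_l} ∏_l w_l^{lα-1}` (indices `l` are 1-based in the paper,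
0-based here). -/
theorem stmt3 (α : ℝ) (hα : α ∈ Set.Ioo (0 : ℝ) 1) (n : ℕ) (hn : 1 ≤ n)
    (s lam : ℝ) (hs : 0 < s) (hlam : 0 < lam)
    (w : Fin n → ℝ) (hw : ∀ l, 0 < w l ∧ w l ≤ 1) :
    ∫ r in Set.univ.pi (fun l : Fin n => Set.Ioo (0 : ℝ) (w l)),
        lam ^ ((n : ℝ) * α) * Real.exp (-(lam * s) / ∏ l, r l) *
          ∏ l, ((w l - r l) ^ (α - 1) * r l ^ (-(((n : ℝ) - ((l : ℕ) : ℝ)) * α) - 1))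
      = Real.Gamma α ^ n * s ^ (-(n : ℝ) * α) * Real.exp (-(lam * s) / ∏ l, w l) *
          ∏ l, w l ^ ((((l : ℕ) : ℝ) + 1) * α - 1) := by
  obtain ⟨hα0, _⟩ := hα
  have hS : MeasurableSet (Set.univ.pi fun l : Fin n => Ioo (0:ℝ) (w l)) :=
    MeasurableSet.univ_pi fun l => measurableSet_Ioo
  rw [MeasureTheory.integral_eq_lintegral_of_nonneg_ae ?hnn ?hm]
  · rw [mainL α hα0 n s lam hs hlam w (fun l => (hw l).1)]
    refine ENNReal.toReal_ofReal ?_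
    refine mul_nonneg (mul_nonneg (mul_nonneg ?_ ?_) ?_) ?_
    · exact pow_nonneg (Real.Gamma_nonneg_of_nonneg hα0.le) n
    · exact Real.rpow_nonneg hs.le _
    · exact (Real.exp_pos _).le
    · exact Finset.prod_nonneg fun l _ => Real.rpow_nonneg (hw l).1.le _
  case hnn =>
    filter_upwards [ae_restrict_mem hS] with r hr
    have hr' : ∀ l, r l ∈ Ioo (0:ℝ) (w l) := fun l => hr l (Set.mem_univ l)
    refine mul_nonneg (mul_nonneg (Real.rpow_nonneg hlam.le _) (Real.exp_pos _).le) ?_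
    exact Finset.prod_nonneg fun l _ => mul_nonneg
      (Real.rpow_nonneg (sub_nonneg.mpr (hr' l).2.le) _) (Real.rpow_nonneg (hr' l).1.le _)
  case hm =>
    exact (integrand_measurable α lam s _ w _).aestronglyMeasurable
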